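/- For every real m ≥ 2 and all real parameters α, θ with 0 ≤ α < 1 and θ > −α, there exists a constant C = C(α, θ, m) < ∞ such that for every integer K ≥ 2 and every z ∈ ∇_K, |B_K φ_m(z)| ≤ C. -/

import Mathlib

open Finset

/-- The function `r(u)`: `r(u) = (1-u)(1-(1-u)^K)/u` for `u > 0`, `r(0) = K`. -/
noncomputable def rfun (K : ℕ) (u : ℝ) : ℝ :=
  if u = 0 then (K : ℝ) else (1 - u) * (1 - (1 - u) ^ K) / u

/-- The simplex `Δ_K`. -/
def DeltaK (K : ℕ) : Set (Fin K → ℝ) :=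
  {z | (∀ i, 0 ≤ z i) ∧ ∑ i, z i = 1}

/-- The ordered simplex `∇_K`. -/
def NablaK (K : ℕ) : Set (Fin K → ℝ) :=
  {z | z ∈ DeltaK K ∧ ∀ i j : Fin K, i ≤ j → z j ≤ z i}

/-- The mainland frequencies `p_i(z)`. -/
noncomputable def pfun (K : ℕ) (z : Fin K → ℝ) (i : Fin K) : ℝ :=
  (1 - z i) ^ K / ∑ l, (1 - z l) ^ K

/-- The drift coefficients `b_i(z)`. -/
noncomputable def bdrift (K : ℕ) (α θ : ℝ) (z : Fin K → ℝ) (i : Fin K) : ℝ :=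
  (1 / 2) * ((θ + α) * (1 - z i) / ((K : ℝ) - 1) - (θ + α) * z i
    + α * pfun K z i * (∑ j, z j * rfun K (z j)) - α * z i * rfun K (z i))

/-- The power sum `φ_m(z) = ∑_{i=1}^K z_i^m` (real exponent). -/
noncomputable def phiK (K : ℕ) (m : ℝ) (z : Fin K → ℝ) : ℝ := ∑ i, z i ^ m

/-- The generator applied to the power sum `φ_m`:
`B_K φ_m(z) = (m(m-1)/2) ∑ z_i^{m-1}(1-z_i) + m ∑ b_i(z) z_i^{m-1}`. -/
noncomputable def BKphi (K : ℕ) (α θ : ℝ) (m : ℝ) (z : Fin K → ℝ) : ℝ :=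
  (m * (m - 1) / 2) * ∑ i, z i ^ (m - 1) * (1 - z i)
    + m * ∑ i, bdrift K α θ z i * z i ^ (m - 1)

lemma mul_rfun_eq (K : ℕ) (u : ℝ) : u * rfun K u = (1 - u) * (1 - (1 - u) ^ K) := by
  rcases eq_or_ne u 0 with h | h
  · simp [h, rfun]
  · rw [rfun, if_neg h, mul_comm, div_mul_cancel₀ _ h]

lemma mul_rfun_nonneg (K : ℕ) {u : ℝ} (h0 : 0 ≤ u) (h1 : u ≤ 1) :
    0 ≤ u * rfun K u := by
  rw [mul_rfun_eq]
  have h2 : (1 - u) ^ K ≤ 1 := pow_le_one₀ (by linarith) (by linarith)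
  have h3 : (0:ℝ) ≤ 1 - u := by linarith
  nlinarith

lemma mul_rfun_le_one (K : ℕ) {u : ℝ} (h0 : 0 ≤ u) (h1 : u ≤ 1) :
    u * rfun K u ≤ 1 := by
  rw [mul_rfun_eq]
  have h2 : (0:ℝ) ≤ (1 - u) ^ K := pow_nonneg (by linarith) K
  nlinarith

lemma sum_pow_K_lb {K : ℕ} (hK : 2 ≤ K) (z : Fin K → ℝ) (hz0 : ∀ i, 0 ≤ z i)
    (hzs : ∑ i, z i = 1) :
    (K : ℝ) * (1 - 1 / K) ^ K ≤ ∑ l, (1 - z l) ^ K := by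
  have hK2 : (2:ℝ) ≤ (K:ℝ) := by exact_mod_cast hK
  have hKpos : (0:ℝ) < K := by linarith
  set a : ℝ := 1 - 1 / K with ha
  have hapos : 0 < a := by
    have h2 : 1 / (K:ℝ) ≤ 1/2 := by
      rw [div_le_div_iff₀ hKpos (by norm_num)]; linarith
    rw [ha]; linarith
  have hz1 : ∀ i, z i ≤ 1 := by
    intro i
    calc z i ≤ ∑ j, z j := Finset.single_le_sum (fun j _ => hz0 j) (Finset.mem_univ i)
      _ = 1 := hzs
  have step : ∀ l : Fin K, a ^ K * (1 + (K:ℝ) * ((1 - z l - a) / a)) ≤ (1 - z l) ^ K := by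
    intro l
    have hb : -2 ≤ (1 - z l - a) / a := by
      have h1 : (0:ℝ) ≤ (1 - z l) / a := div_nonneg (by linarith [hz1 l]) hapos.le
      have h2 : (1 - z l - a) / a = (1 - z l) / a - 1 := by field_simp
      linarith
    have hber := one_add_mul_le_pow hb K
    have hmul := mul_le_mul_of_nonneg_left hber (pow_nonneg hapos.le K)
    have heq : a * (1 + (1 - z l - a) / a) = 1 - z l := by field_simp; ring
    calc a ^ K * (1 + (K:ℝ) * ((1 - z l - a) / a))
        ≤ a ^ K * (1 + (1 - z l - a) / a) ^ K := hmul
      _ = (a * (1 + (1 - z l - a) / a)) ^ K := by rw [mul_pow]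
      _ = (1 - z l) ^ K := by rw [heq]
  have hsle : ∑ l, (a ^ K * (1 + (K:ℝ) * ((1 - z l - a) / a))) ≤ ∑ l, (1 - z l) ^ K := Finset.sum_le_sum (fun l _ => step l)
  have hsum2 : ∑ l, (a ^ K * (1 + (K:ℝ) * ((1 - z l - a) / a))) = (K:ℝ) * a ^ K := by
    have hterm : ∀ l : Fin K, a ^ K * (1 + (K:ℝ) * ((1 - z l - a) / a))
        = (a ^ K + (K:ℝ) * a ^ K / a * (1 - a)) - ((K:ℝ) * a ^ K / a) * z l := by
      intro l; field_simp; ring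
    rw [Finset.sum_congr rfl fun l _ => hterm l, Finset.sum_sub_distrib,
      Finset.sum_const, ← Finset.mul_sum, hzs, Finset.card_univ, Fintype.card_fin,
      nsmul_eq_mul]
    have h1a : (K:ℝ) * (1 - a) = 1 := by rw [ha]; field_simp; ring
    linear_combination ((K:ℝ) * a ^ K / a) * h1a
  linarith [hsum2 ▸ hsle]
/-- For every real `m ≥ 2` and all parameters `0 ≤ α < 1`, `θ > −α`,
there is a constant `C = C(α,θ,m)` such that for every `K ≥ 2` and every `z ∈ ∇_K`,
`|B_K φ_m(z)| ≤ C`. -/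
theorem stmt12 (m : ℝ) (hm : 2 ≤ m) (α θ : ℝ) (hα0 : 0 ≤ α) (hα1 : α < 1)
    (hθ : -α < θ) :
    ∃ C : ℝ, ∀ K : ℕ, 2 ≤ K → ∀ z ∈ NablaK K, |BKphi K α θ m z| ≤ C := by
  set Cb : ℝ := (|θ + α| + |θ + α| + 8 * α + α) / 2 with hCb
  have hCb0 : 0 ≤ Cb := by positivity
  refine ⟨m * (m - 1) / 2 + m * Cb, ?_⟩
  intro K hK z hz
  obtain ⟨⟨hz0, hzs⟩, _hord⟩ := hz
  have hK2 : (2:ℝ) ≤ (K:ℝ) := by exact_mod_cast hK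
  have hKpos : (0:ℝ) < K := by linarith
  have hz1 : ∀ i, z i ≤ 1 := by
    intro i
    calc z i ≤ ∑ j, z j := Finset.single_le_sum (fun j _ => hz0 j) (Finset.mem_univ i)
      _ = 1 := hzs
  -- rpow facts
  have hp0 : ∀ i : Fin K, 0 ≤ z i ^ (m - 1) := fun i => Real.rpow_nonneg (hz0 i) _
  have hp1 : ∀ i : Fin K, z i ^ (m - 1) ≤ z i := by
    intro i
    rcases eq_or_lt_of_le (hz0 i) with h | h
    · rw [← h, Real.zero_rpow (by intro hc; linarith [sub_eq_zero.mp hc] : m - 1 ≠ 0)]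
    · calc z i ^ (m - 1) ≤ z i ^ (1:ℝ) :=
          Real.rpow_le_rpow_of_exponent_ge h (hz1 i) (by linarith)
        _ = z i := Real.rpow_one _
  have hps : ∑ i, z i ^ (m - 1) ≤ 1 := by
    calc ∑ i, z i ^ (m - 1) ≤ ∑ i, z i := Finset.sum_le_sum (fun i _ => hp1 i)
      _ = 1 := hzs
  -- S lower bound
  set a : ℝ := 1 - 1 / K with ha
  have hapos : 0 < a := by
    have h2 : 1 / (K:ℝ) ≤ 1/2 := by
      rw [div_le_div_iff₀ hKpos (by norm_num)]; linarith
    rw [ha]; linarith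
  set S : ℝ := ∑ l, (1 - z l) ^ K with hS
  have hSlb : (K:ℝ) * a ^ K ≤ S := sum_pow_K_lb hK z hz0 hzs
  have hSpos : 0 < S := lt_of_lt_of_le (by positivity) hSlb
  -- (1/a)^K ≤ 8
  have hKm1 : (1:ℝ) ≤ (K:ℝ) - 1 := by linarith
  have hinva : 1 / a = 1 + 1 / ((K:ℝ) - 1) := by
    rw [ha]; field_simp; ring
  have hexp1 : 1 / a ≤ Real.exp (1 / ((K:ℝ) - 1)) := by
    rw [hinva]; linarith [Real.add_one_le_exp (1 / ((K:ℝ) - 1))]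
  have hA : (1 / a) ^ K ≤ 8 := by
    have h1 : (1 / a) ^ K ≤ Real.exp (1 / ((K:ℝ) - 1)) ^ K :=
      pow_le_pow_left₀ (by positivity) hexp1 K
    have h2 : Real.exp (1 / ((K:ℝ) - 1)) ^ K = Real.exp ((K:ℝ) * (1 / ((K:ℝ) - 1))) :=
      (Real.exp_nat_mul _ K).symm
    have h3 : (K:ℝ) * (1 / ((K:ℝ) - 1)) ≤ 2 := by
      rw [mul_one_div, div_le_iff₀ (by linarith)]; linarith
    have h4 : Real.exp ((K:ℝ) * (1 / ((K:ℝ) - 1))) ≤ Real.exp 2 := Real.exp_le_exp.mpr h3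
    have h5 : Real.exp 2 ≤ 8 := by
      have hd := Real.exp_one_lt_d9
      have he : Real.exp 2 = Real.exp 1 * Real.exp 1 := by
        rw [← Real.exp_add]; norm_num
      nlinarith [Real.exp_pos 1]
    calc (1 / a) ^ K ≤ Real.exp (1 / ((K:ℝ) - 1)) ^ K := h1
      _ = Real.exp ((K:ℝ) * (1 / ((K:ℝ) - 1))) := h2
      _ ≤ Real.exp 2 := h4
      _ ≤ 8 := h5
  -- T bounds
  set T : ℝ := ∑ j, z j * rfun K (z j) with hT
  have hT0 : 0 ≤ T := Finset.sum_nonneg fun j _ => mul_rfun_nonneg K (hz0 j) (hz1 j)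
  have hTK : T ≤ K := by
    calc T ≤ ∑ _j : Fin K, (1:ℝ) :=
          Finset.sum_le_sum fun j _ => mul_rfun_le_one K (hz0 j) (hz1 j)
      _ = K := by simp
  -- K ≤ (1/a)^K * S
  have hKinv : (K:ℝ) ≤ (1 / a) ^ K * S := by
    have h1 : (0:ℝ) ≤ (1 / a) ^ K := by positivity
    have h2 := mul_le_mul_of_nonneg_left hSlb h1
    have h3 : (1 / a) ^ K * ((K:ℝ) * a ^ K) = K := by
      rw [one_div_pow]; field_simp
    linarith
  -- p_i * T bounds
  have hpT : ∀ i : Fin K, 0 ≤ pfun K z i * T ∧ pfun K z i * T ≤ 8 := by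
    intro i
    have hzi1 : (0:ℝ) ≤ 1 - z i := by linarith [hz1 i]
    have hnum0 : (0:ℝ) ≤ (1 - z i) ^ K := pow_nonneg hzi1 K
    have hnum1 : (1 - z i) ^ K ≤ 1 := pow_le_one₀ hzi1 (by linarith [hz0 i])
    have hpe : pfun K z i = (1 - z i) ^ K / S := by rw [pfun, ← hS]
    have hpnn : 0 ≤ pfun K z i := by rw [hpe]; positivity
    constructor
    · exact mul_nonneg hpnn hT0
    · have hple : pfun K z i ≤ 1 / S := by
        rw [hpe]; gcongr
      calc pfun K z i * T ≤ (1 / S) * K := mul_le_mul hple hTK hT0 (by positivity)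
        _ = (K:ℝ) / S := by ring
        _ ≤ (1 / a) ^ K := by
            rw [div_le_iff₀ hSpos]; linarith
        _ ≤ 8 := hA
  -- bdrift bound
  have hb : ∀ i : Fin K, |bdrift K α θ z i| ≤ Cb := by
    intro i
    obtain ⟨hpT0, hpT8⟩ := hpT i
    have ht1 : |(θ + α) * (1 - z i) / ((K:ℝ) - 1)| ≤ |θ + α| := by
      rw [mul_div_assoc, abs_mul]
      have hq : |(1 - z i) / ((K:ℝ) - 1)| ≤ 1 := by
        rw [abs_of_nonneg (div_nonneg (by linarith [hz1 i]) (by linarith)),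
          div_le_one (by linarith)]
        linarith [hz0 i]
      calc |θ + α| * |(1 - z i) / ((K:ℝ) - 1)| ≤ |θ + α| * 1 :=
            mul_le_mul_of_nonneg_left hq (abs_nonneg _)
        _ = |θ + α| := mul_one _
    have ht2 : |(θ + α) * z i| ≤ |θ + α| := by
      rw [abs_mul, abs_of_nonneg (hz0 i)]
      calc |θ + α| * z i ≤ |θ + α| * 1 := mul_le_mul_of_nonneg_left (hz1 i) (abs_nonneg _)
        _ = |θ + α| := mul_one _
    have ht3u : α * pfun K z i * T ≤ 8 * α := by
      rw [mul_assoc]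
      calc α * (pfun K z i * T) ≤ α * 8 := mul_le_mul_of_nonneg_left hpT8 hα0
        _ = 8 * α := mul_comm _ _
    have ht3l : 0 ≤ α * pfun K z i * T := by
      rw [mul_assoc]; exact mul_nonneg hα0 hpT0
    have ht4l : 0 ≤ α * z i * rfun K (z i) := by
      rw [mul_assoc]; exact mul_nonneg hα0 (mul_rfun_nonneg K (hz0 i) (hz1 i))
    have ht4u : α * z i * rfun K (z i) ≤ α := by
      rw [mul_assoc]
      calc α * (z i * rfun K (z i)) ≤ α * 1 :=
            mul_le_mul_of_nonneg_left (mul_rfun_le_one K (hz0 i) (hz1 i)) hα0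
        _ = α := mul_one _
    have h1 := abs_le.mp ht1
    have h2 := abs_le.mp ht2
    rw [bdrift, ← hT, abs_le, hCb]
    constructor
    · linarith [h1.1, h2.2, ht3l, ht4u]
    · linarith [h1.2, h2.1, ht3u, ht4l]
  -- sum bounds
  have hsum1 : |∑ i, z i ^ (m - 1) * (1 - z i)| ≤ 1 := by
    rw [abs_le]
    constructor
    · have h0 : 0 ≤ ∑ i, z i ^ (m - 1) * (1 - z i) :=
        Finset.sum_nonneg fun i _ => mul_nonneg (hp0 i) (by linarith [hz1 i])
      linarith
    · calc ∑ i, z i ^ (m - 1) * (1 - z i) ≤ ∑ i, z i ^ (m - 1) :=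
          Finset.sum_le_sum fun i _ => by
            calc z i ^ (m - 1) * (1 - z i) ≤ z i ^ (m - 1) * 1 :=
                  mul_le_mul_of_nonneg_left (by linarith [hz0 i]) (hp0 i)
              _ = z i ^ (m - 1) := mul_one _
        _ ≤ 1 := hps
  have hsum2 : |∑ i, bdrift K α θ z i * z i ^ (m - 1)| ≤ Cb := by
    calc |∑ i, bdrift K α θ z i * z i ^ (m - 1)|
        ≤ ∑ i, |bdrift K α θ z i * z i ^ (m - 1)| := Finset.abs_sum_le_sum_abs _ _
      _ ≤ ∑ i, Cb * z i ^ (m - 1) := Finset.sum_le_sum fun i _ => by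
          rw [abs_mul, abs_of_nonneg (hp0 i)]
          exact mul_le_mul_of_nonneg_right (hb i) (hp0 i)
      _ = Cb * ∑ i, z i ^ (m - 1) := by rw [Finset.mul_sum]
      _ ≤ Cb * 1 := mul_le_mul_of_nonneg_left hps hCb0
      _ = Cb := mul_one _
  have hm0 : (0:ℝ) ≤ m := by linarith
  have hc1 : (0:ℝ) ≤ m * (m - 1) / 2 := by nlinarith
  rw [BKphi]
  calc |(m * (m - 1) / 2) * ∑ i, z i ^ (m - 1) * (1 - z i)
        + m * ∑ i, bdrift K α θ z i * z i ^ (m - 1)|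
      ≤ |(m * (m - 1) / 2) * ∑ i, z i ^ (m - 1) * (1 - z i)|
        + |m * ∑ i, bdrift K α θ z i * z i ^ (m - 1)| := abs_add_le _ _
    _ = (m * (m - 1) / 2) * |∑ i, z i ^ (m - 1) * (1 - z i)|
        + m * |∑ i, bdrift K α θ z i * z i ^ (m - 1)| := by
        rw [abs_mul, abs_mul, abs_of_nonneg hc1, abs_of_nonneg hm0]
    _ ≤ (m * (m - 1) / 2) * 1 + m * Cb := by gcongr
    _ = m * (m - 1) / 2 + m * Cb := by ring
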